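/- Let M > 0, α₁ > 1, and let τ : ℝ → ℝ be differentiable on [0,1] with |τ′(t)| ≤ M for all t ∈ [0,1] and |τ′(t) − τ′(s)| ≤ M·|t − s|^{α₁−1} for all t, s ∈ [0,1]. For an integer m ≥ 2, set t_ℓ* = (2ℓ−1)/(2m) and a_ℓ = m·∫_{(ℓ−1)/m}^{ℓ/m} τ(t) dt for ℓ = 1, …, m, and define the piecewise-linear interpolant τ̂ : [0,1] → ℝ by τ̂(t) = a₁ for t ∈ [0, t₁*], τ̂(t) = a_m for t ∈ [t_m*, 1], and τ̂(t) = m(t_{ℓ+1}* − t)·a_ℓ + m(t − t_ℓ*)·a_{ℓ+1} for t ∈ [t_ℓ*, t_{ℓ+1}*]. Then (i) |τ̂(t) − τ(t)| ≤ 2M·m^{−α₁} for every t ∈ [t₁*, t_m*], and (ii) ∫₀¹ (τ̂(t) − τ(t))² dt ≤ 4M²·m^{−2α₁} + M²·m^{−3}. -/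

import Mathlib

open MeasureTheory Real Set intervalIntegral

lemma aux_deriv_cont {M α₁ : ℝ} (hα₁ : 1 < α₁) {τ : ℝ → ℝ}
    (hholder : ∀ t ∈ Set.Icc (0:ℝ) 1, ∀ s ∈ Set.Icc (0:ℝ) 1,
      |deriv τ t - deriv τ s| ≤ M * |t - s| ^ (α₁ - 1)) :
    ContinuousOn (deriv τ) (Set.Icc 0 1) := by
  intro t ht
  rw [ContinuousWithinAt, tendsto_iff_dist_tendsto_zero]
  have hg : Filter.Tendsto (fun s : ℝ => M * |s - t| ^ (α₁ - 1))
      (nhdsWithin t (Set.Icc 0 1)) (nhds 0) := by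
    have h1 : Filter.Tendsto (fun s : ℝ => |s - t|) (nhdsWithin t (Set.Icc 0 1)) (nhds 0) := by
      have : Filter.Tendsto (fun s : ℝ => |s - t|) (nhds t) (nhds |t - t|) :=
        ((continuous_id.sub continuous_const).abs.tendsto t)
      simpa using this.mono_left nhdsWithin_le_nhds
    have h2 := (Real.continuousAt_rpow_const 0 (α₁ - 1) (Or.inr (by linarith))).tendsto
    have h3 := h2.comp h1
    rw [Real.zero_rpow (by intro h; linarith : α₁ - 1 ≠ 0)] at h3
    simpa using h3.const_mul M
  refine squeeze_zero' ?_ ?_ hg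
  · filter_upwards with s using dist_nonneg
  · filter_upwards [self_mem_nhdsWithin] with s hs
    rw [Real.dist_eq]
    exact hholder s hs t ht

lemma aux_ftc {τ : ℝ → ℝ} (hdiff : ∀ t ∈ Set.Icc (0:ℝ) 1, DifferentiableAt ℝ τ t)
    (hdc : ContinuousOn (deriv τ) (Set.Icc 0 1))
    {s t : ℝ} (hs : s ∈ Set.Icc (0:ℝ) 1) (ht : t ∈ Set.Icc (0:ℝ) 1) :
    τ s - τ t = ∫ u in t..s, deriv τ u := by
  have hsub : Set.uIcc t s ⊆ Set.Icc 0 1 := Set.uIcc_subset_Icc ht hs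
  exact (integral_deriv_eq_sub (fun x hx => hdiff x (hsub hx))
    ((hdc.mono hsub).intervalIntegrable)).symm

lemma aux_lip {M α₁ : ℝ} (hα₁ : 1 < α₁) {τ : ℝ → ℝ}
    (hdiff : ∀ t ∈ Set.Icc (0:ℝ) 1, DifferentiableAt ℝ τ t)
    (hbd : ∀ t ∈ Set.Icc (0:ℝ) 1, |deriv τ t| ≤ M)
    (hholder : ∀ t ∈ Set.Icc (0:ℝ) 1, ∀ s ∈ Set.Icc (0:ℝ) 1,
      |deriv τ t - deriv τ s| ≤ M * |t - s| ^ (α₁ - 1))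
    {s t : ℝ} (hs : s ∈ Set.Icc (0:ℝ) 1) (ht : t ∈ Set.Icc (0:ℝ) 1) :
    |τ s - τ t| ≤ M * |s - t| := by
  rw [aux_ftc hdiff (aux_deriv_cont hα₁ hholder) hs ht]
  have := intervalIntegral.norm_integral_le_of_norm_le_const (C := M) (f := deriv τ)
    (a := t) (b := s) (by
      intro x hx
      have hx' : x ∈ Set.Icc (0:ℝ) 1 := (Set.uIcc_subset_Icc ht hs) (Set.uIoc_subset_uIcc hx)
      simpa using hbd x hx')
  simpa using this

lemma aux_taylor {M α₁ : ℝ} (hM : 0 < M) (hα₁ : 1 < α₁) {τ : ℝ → ℝ}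
    (hdiff : ∀ t ∈ Set.Icc (0:ℝ) 1, DifferentiableAt ℝ τ t)
    (hholder : ∀ t ∈ Set.Icc (0:ℝ) 1, ∀ s ∈ Set.Icc (0:ℝ) 1,
      |deriv τ t - deriv τ s| ≤ M * |t - s| ^ (α₁ - 1))
    {s t : ℝ} (hs : s ∈ Set.Icc (0:ℝ) 1) (ht : t ∈ Set.Icc (0:ℝ) 1) :
    |τ s - τ t - deriv τ t * (s - t)| ≤ M * |s - t| ^ α₁ := by
  rcases eq_or_ne s t with rfl | hne
  · simp [Real.zero_rpow (by positivity : α₁ ≠ 0)]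
  have hdc := aux_deriv_cont hα₁ hholder
  have hsub : Set.uIcc t s ⊆ Set.Icc 0 1 := Set.uIcc_subset_Icc ht hs
  have heq : τ s - τ t - deriv τ t * (s - t) = ∫ u in t..s, (deriv τ u - deriv τ t) := by
    rw [intervalIntegral.integral_sub ((hdc.mono hsub).intervalIntegrable)
      intervalIntegrable_const, intervalIntegral.integral_const]
    rw [aux_ftc hdiff hdc hs ht]
    simp [smul_eq_mul]; ring
  rw [heq]
  have habs : (0:ℝ) < |s - t| := abs_pos.2 (sub_ne_zero.2 hne)
  have hbnd := intervalIntegral.norm_integral_le_of_norm_le_const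
    (C := M * |s - t| ^ (α₁ - 1)) (f := fun u => deriv τ u - deriv τ t) (a := t) (b := s) (by
      intro x hx
      have hx1 : x ∈ Set.Icc (0:ℝ) 1 := hsub (Set.uIoc_subset_uIcc hx)
      have h1 : |deriv τ x - deriv τ t| ≤ M * |x - t| ^ (α₁ - 1) := hholder x hx1 t ht
      have h2 : |x - t| ≤ |s - t| := by
        rcases Set.mem_uIoc.1 hx with ⟨h3, h4⟩ | ⟨h3, h4⟩ <;>
          rw [abs_le] <;> constructor <;> simp [abs_le] at * <;> nlinarith [abs_nonneg (s-t), le_abs_self (s-t), neg_abs_le (s-t)]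
      refine le_trans h1 (mul_le_mul_of_nonneg_left ?_ hM.le)
      exact Real.rpow_le_rpow (abs_nonneg _) h2 (by linarith)
      )
  have hpow : |s - t| ^ (α₁ - 1) * |s - t| = |s - t| ^ α₁ := by
    calc |s - t| ^ (α₁ - 1) * |s - t| = |s - t| ^ (α₁ - 1) * |s - t| ^ (1:ℝ) := by
          rw [Real.rpow_one]
      _ = |s - t| ^ (α₁ - 1 + 1) := (Real.rpow_add habs _ _).symm
      _ = |s - t| ^ α₁ := by ring_nf
  calc |∫ u in t..s, (deriv τ u - deriv τ t)| ≤ M * |s - t| ^ (α₁ - 1) * |s - t| := by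
        simpa using hbnd
    _ = M * |s - t| ^ α₁ := by rw [mul_assoc, hpow]

set_option maxHeartbeats 1000000 in
theorem piecewise_linear_interpolant_error (M α₁ : ℝ) (hM : 0 < M) (hα₁ : 1 < α₁)
    (τ : ℝ → ℝ) (hdiff : ∀ t ∈ Set.Icc (0 : ℝ) 1, DifferentiableAt ℝ τ t)
    (hbd : ∀ t ∈ Set.Icc (0 : ℝ) 1, |deriv τ t| ≤ M)
    (hholder : ∀ t ∈ Set.Icc (0 : ℝ) 1, ∀ s ∈ Set.Icc (0 : ℝ) 1,
      |deriv τ t - deriv τ s| ≤ M * |t - s| ^ (α₁ - 1))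
    (m : ℕ) (hm : 2 ≤ m) (tstar : ℕ → ℝ) (a : ℕ → ℝ)
    (htstar : ∀ ℓ, tstar ℓ = (2 * (ℓ : ℝ) - 1) / (2 * m))
    (ha : ∀ ℓ, a ℓ = m * ∫ t in (((ℓ : ℝ) - 1) / m)..((ℓ : ℝ) / m), τ t)
    (τhat : ℝ → ℝ)
    (hτhat₁ : ∀ t ∈ Set.Icc (0 : ℝ) (tstar 1), τhat t = a 1)
    (hτhat₂ : ∀ t ∈ Set.Icc (tstar m) 1, τhat t = a m)
    (hτhat₃ : ∀ ℓ : ℕ, 1 ≤ ℓ → ℓ + 1 ≤ m → ∀ t ∈ Set.Icc (tstar ℓ) (tstar (ℓ + 1)),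
      τhat t = m * (tstar (ℓ + 1) - t) * a ℓ + m * (t - tstar ℓ) * a (ℓ + 1)) :
    (∀ t ∈ Set.Icc (tstar 1) (tstar m), |τhat t - τ t| ≤ 2 * M * (m : ℝ) ^ (-α₁)) ∧
      (∫ t in (0 : ℝ)..1, (τhat t - τ t) ^ 2) ≤
        4 * M ^ 2 * (m : ℝ) ^ (-(2 * α₁)) + M ^ 2 / (m : ℝ) ^ 3 := by
  have hm' : (2:ℝ) ≤ (m:ℝ) := by exact_mod_cast hm
  have hmpos : (0:ℝ) < (m:ℝ) := by linarith
  have hconton : ContinuousOn τ (Set.Icc 0 1) :=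
    fun t ht => (hdiff t ht).continuousAt.continuousWithinAt
  have hdc := aux_deriv_cont hα₁ hholder
  -- membership of tstar
  have htmem : ∀ ℓ : ℕ, 1 ≤ ℓ → ℓ ≤ m → tstar ℓ ∈ Set.Icc (0:ℝ) 1 := by
    intro ℓ h1 h2
    have h1' : (1:ℝ) ≤ (ℓ:ℝ) := by exact_mod_cast h1
    have h2' : (ℓ:ℝ) ≤ (m:ℝ) := by exact_mod_cast h2
    rw [htstar]
    constructor
    · exact div_nonneg (by linarith) (by positivity)
    · rw [div_le_one (by positivity)]; linarith
  -- m^(-α₁) facts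
  have hma : (1/(m:ℝ)) ^ α₁ = (m:ℝ) ^ (-α₁) := by
    rw [one_div, Real.inv_rpow hmpos.le, ← Real.rpow_neg hmpos.le]
  have hma2 : (1/(2*(m:ℝ))) ^ α₁ ≤ (m:ℝ) ^ (-α₁) := by
    rw [← hma]
    apply Real.rpow_le_rpow (by positivity) (by rw [div_le_div_iff₀ (by positivity) (by positivity)]; linarith) (by linarith)
  -- averages are close to midpoint values
  have havg : ∀ ℓ : ℕ, 1 ≤ ℓ → ℓ ≤ m → |a ℓ - τ (tstar ℓ)| ≤ M * (m:ℝ) ^ (-α₁) := by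
    intro ℓ h1 h2
    have h1' : (1:ℝ) ≤ (ℓ:ℝ) := by exact_mod_cast h1
    have h2' : (ℓ:ℝ) ≤ (m:ℝ) := by exact_mod_cast h2
    set p : ℝ := ((ℓ:ℝ) - 1) / m with hp
    set q : ℝ := (ℓ:ℝ) / m with hq
    have hpq : q - p = 1/m := by rw [hp, hq]; field_simp; ring
    have hple : p ≤ q := by
      rw [hp, hq, div_le_div_iff₀ hmpos hmpos]; nlinarith
    have hpmem : p ∈ Set.Icc (0:ℝ) 1 := by
      rw [hp]
      constructor
      · apply div_nonneg (by linarith) hmpos.le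
      · rw [div_le_one hmpos]; linarith
    have hqmem : q ∈ Set.Icc (0:ℝ) 1 := by
      rw [hq]
      constructor
      · apply div_nonneg (by linarith) hmpos.le
      · rw [div_le_one hmpos]; linarith
    have hTmid : tstar ℓ = (p + q) / 2 := by rw [htstar, hp, hq]; field_simp; ring
    have hTmem : tstar ℓ ∈ Set.Icc (0:ℝ) 1 := htmem ℓ h1 h2
    set T := tstar ℓ with hT
    set c := deriv τ T with hc
    have hsub : Set.uIcc p q ⊆ Set.Icc 0 1 := Set.uIcc_subset_Icc hpmem hqmem
    have hIτ : IntervalIntegrable τ volume p q := (hconton.mono hsub).intervalIntegrable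
    have hcont1 : Continuous (fun t : ℝ => c * (t - T)) :=
      continuous_const.mul (continuous_id.sub continuous_const)
    have hIlin : IntervalIntegrable (fun t => τ T + c * (t - T)) volume p q :=
      (continuous_const.add hcont1).intervalIntegrable p q
    have hlin : (∫ t in p..q, (τ T + c * (t - T))) = (q - p) * τ T := by
      rw [intervalIntegral.integral_add intervalIntegrable_const
        (hcont1.intervalIntegrable p q),
        intervalIntegral.integral_const_mul,
        intervalIntegral.integral_comp_sub_right (fun x => x) T,
        integral_id, intervalIntegral.integral_const]
      simp only [smul_eq_mul]
      rw [hTmid]; ring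
    have hkey : a ℓ - τ T = m * ∫ t in p..q, (τ t - (τ T + c * (t - T))) := by
      rw [intervalIntegral.integral_sub hIτ hIlin, hlin, ha ℓ, hpq, ← hp, ← hq]
      field_simp
    rw [hkey]
    have hhalf : 1/(2*(m:ℝ)) = (1/(m:ℝ))/2 := by ring
    have hbnd := intervalIntegral.norm_integral_le_of_norm_le_const
      (C := M * (1/(2*(m:ℝ))) ^ α₁) (f := fun t => τ t - (τ T + c * (t - T)))
      (a := p) (b := q) (by
        intro x hx
        have hx1 : x ∈ Set.Icc (0:ℝ) 1 := hsub (Set.uIoc_subset_uIcc hx)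
        have h1 : |τ x - τ T - deriv τ T * (x - T)| ≤ M * |x - T| ^ α₁ :=
          aux_taylor hM hα₁ hdiff hholder hx1 hTmem
        have hxmem : x ∈ Set.Ioc p q := by rwa [Set.uIoc_of_le hple] at hx
        have h2 : |x - T| ≤ 1/(2*(m:ℝ)) := by
          rw [hTmid, abs_le]
          constructor <;> linarith [hxmem.1, hxmem.2, hpq, hhalf]
        have h3 : |x - T| ^ α₁ ≤ (1/(2*(m:ℝ))) ^ α₁ :=
          Real.rpow_le_rpow (abs_nonneg _) h2 (by linarith)
        calc ‖τ x - (τ T + c * (x - T))‖ = |τ x - τ T - deriv τ T * (x - T)| := by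
              rw [Real.norm_eq_abs, hc]; ring_nf
          _ ≤ M * |x - T| ^ α₁ := h1
          _ ≤ M * (1/(2*(m:ℝ))) ^ α₁ := mul_le_mul_of_nonneg_left h3 hM.le)
    rw [abs_mul, abs_of_nonneg hmpos.le]
    have h5 : |q - p| = 1/m := by rw [hpq, abs_of_nonneg (by positivity)]
    rw [Real.norm_eq_abs, h5] at hbnd
    calc (m:ℝ) * |∫ t in p..q, (τ t - (τ T + c * (t - T)))|
        ≤ (m:ℝ) * (M * (1/(2*(m:ℝ))) ^ α₁ * (1/m)) :=
          mul_le_mul_of_nonneg_left hbnd hmpos.le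
      _ = M * (1/(2*(m:ℝ))) ^ α₁ := by field_simp
      _ ≤ M * (m:ℝ) ^ (-α₁) := mul_le_mul_of_nonneg_left hma2 hM.le
  -- pointwise bound on middle intervals
  have hmid : ∀ ℓ : ℕ, 1 ≤ ℓ → ℓ + 1 ≤ m → ∀ t ∈ Set.Icc (tstar ℓ) (tstar (ℓ+1)),
      |τhat t - τ t| ≤ 2 * M * (m:ℝ) ^ (-α₁) := by
    intro ℓ h1 h2 t htIcc
    have h1' : (1:ℝ) ≤ (ℓ:ℝ) := by exact_mod_cast h1
    have h2' : (ℓ:ℝ) + 1 ≤ (m:ℝ) := by exact_mod_cast h2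
    set P := tstar ℓ with hP
    set Q := tstar (ℓ+1) with hQ
    have hQP1 : (m:ℝ) * (Q - P) = 1 := by
      rw [hQ, hP, htstar, htstar]; push_cast; field_simp; ring
    have hPmem : P ∈ Set.Icc (0:ℝ) 1 := htmem ℓ h1 (by omega)
    have hQmem : Q ∈ Set.Icc (0:ℝ) 1 := htmem (ℓ+1) (by omega) h2
    have htmem' : t ∈ Set.Icc (0:ℝ) 1 :=
      ⟨le_trans hPmem.1 htIcc.1, le_trans htIcc.2 hQmem.2⟩
    set lam := (m:ℝ) * (Q - t) with hlam
    set mu := (m:ℝ) * (t - P) with hmu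
    have hlamnn : 0 ≤ lam := mul_nonneg hmpos.le (by linarith [htIcc.2])
    have hmunn : 0 ≤ mu := mul_nonneg hmpos.le (by linarith [htIcc.1])
    have hsum : lam + mu = 1 := by rw [hlam, hmu, ← hQP1]; ring
    set c := deriv τ t with hc
    have hid : τhat t - τ t = lam * (a ℓ - τ P) + mu * (a (ℓ+1) - τ Q)
        + lam * (τ P - τ t - c * (P - t)) + mu * (τ Q - τ t - c * (Q - t)) := by
      rw [hτhat₃ ℓ h1 h2 t htIcc, hlam, hmu, ← hP, ← hQ]
      linear_combination (τ t) * hQP1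
    have hA : |a ℓ - τ P| ≤ M * (m:ℝ) ^ (-α₁) := havg ℓ h1 (by omega)
    have hB : |a (ℓ+1) - τ Q| ≤ M * (m:ℝ) ^ (-α₁) := havg (ℓ+1) (by omega) h2
    have hPt : |P - t| ≤ 1/(m:ℝ) := by
      rw [abs_le]
      have : Q - P = 1/(m:ℝ) := by field_simp at hQP1 ⊢; linarith [hQP1]
      constructor <;> linarith [htIcc.1, htIcc.2]
    have hQt : |Q - t| ≤ 1/(m:ℝ) := by
      rw [abs_le]
      have : Q - P = 1/(m:ℝ) := by field_simp at hQP1 ⊢; linarith [hQP1]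
      constructor <;> linarith [htIcc.1, htIcc.2]
    have hE1 : |τ P - τ t - c * (P - t)| ≤ M * (m:ℝ) ^ (-α₁) := by
      refine le_trans (aux_taylor hM hα₁ hdiff hholder hPmem htmem') ?_
      rw [← hma]
      exact mul_le_mul_of_nonneg_left
        (Real.rpow_le_rpow (abs_nonneg _) hPt (by linarith)) hM.le
    have hE2 : |τ Q - τ t - c * (Q - t)| ≤ M * (m:ℝ) ^ (-α₁) := by
      refine le_trans (aux_taylor hM hα₁ hdiff hholder hQmem htmem') ?_
      rw [← hma]
      exact mul_le_mul_of_nonneg_left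
        (Real.rpow_le_rpow (abs_nonneg _) hQt (by linarith)) hM.le
    have hsum' : lam * (M * (m:ℝ) ^ (-α₁)) + mu * (M * (m:ℝ) ^ (-α₁)) = M * (m:ℝ) ^ (-α₁) := by
      linear_combination (M * (m:ℝ) ^ (-α₁)) * hsum
    rw [hid]
    rw [abs_le] at hA hB hE1 hE2 ⊢
    constructor <;>
      linarith [hsum', mul_le_mul_of_nonneg_left hA.2 hlamnn, mul_le_mul_of_nonneg_left hA.1 hlamnn,
        mul_le_mul_of_nonneg_left hB.2 hmunn, mul_le_mul_of_nonneg_left hB.1 hmunn,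
        mul_le_mul_of_nonneg_left hE1.2 hlamnn, mul_le_mul_of_nonneg_left hE1.1 hlamnn,
        mul_le_mul_of_nonneg_left hE2.2 hmunn, mul_le_mul_of_nonneg_left hE2.1 hmunn]
  -- part (i)
  have parti : ∀ t ∈ Set.Icc (tstar 1) (tstar m), |τhat t - τ t| ≤ 2 * M * (m:ℝ) ^ (-α₁) := by
    intro t ht
    set x := (m:ℝ) * t + 1/2 with hx
    have hx1 : (1:ℝ) ≤ x := by
      have := ht.1
      rw [htstar] at this
      push_cast at this
      rw [hx]
      rw [div_le_iff₀ (by positivity)] at this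
      linarith
    have hxm : x ≤ (m:ℝ) := by
      have := ht.2
      rw [htstar] at this
      rw [le_div_iff₀ (by positivity)] at this
      rw [hx]; linarith
    set ℓ := min ⌊x⌋₊ (m - 1) with hℓ
    have hℓ1 : 1 ≤ ℓ := by
      have hfl : 1 ≤ ⌊x⌋₊ := Nat.le_floor (by exact_mod_cast hx1)
      omega
    have hℓm : ℓ + 1 ≤ m := by omega
    have hlow : tstar ℓ ≤ t := by
      have hcast : (ℓ:ℝ) ≤ x := by
        have h1 : (ℓ:ℝ) ≤ (⌊x⌋₊:ℝ) := by exact_mod_cast min_le_left _ _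
        exact le_trans h1 (Nat.floor_le (by linarith))
      rw [htstar, div_le_iff₀ (by positivity)]
      rw [hx] at hcast; linarith
    have hhigh : t ≤ tstar (ℓ+1) := by
      have hcast : x ≤ (ℓ:ℝ) + 1 := by
        rcases min_cases ⌊x⌋₊ (m-1) with ⟨hmin, _⟩ | ⟨hmin, hgt⟩
        · rw [hℓ, hmin]
          exact le_of_lt (Nat.lt_floor_add_one x)
        · have : ℓ = m - 1 := by omega
          have : (ℓ:ℝ) + 1 = (m:ℝ) := by
            rw [this]; push_cast [Nat.cast_sub (by omega : 1 ≤ m)]; ring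
          rw [this]; exact hxm
      rw [htstar, le_div_iff₀ (by positivity)]
      push_cast
      rw [hx] at hcast; linarith
    exact hmid ℓ hℓ1 hℓm t ⟨hlow, hhigh⟩
  refine ⟨parti, ?_⟩
  -- part (ii)
  have hT1val : tstar 1 = 1/(2*(m:ℝ)) := by rw [htstar]; norm_num
  have hT1mem : tstar 1 ∈ Set.Icc (0:ℝ) 1 := htmem 1 le_rfl (by omega)
  have hTmmem : tstar m ∈ Set.Icc (0:ℝ) 1 := htmem m (by omega) le_rfl
  have htsmono : ∀ ℓ : ℕ, tstar ℓ ≤ tstar (ℓ+1) := by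
    intro ℓ
    rw [htstar, htstar, div_le_div_iff₀ (by positivity) (by positivity)]
    push_cast
    nlinarith [hmpos, (Nat.cast_nonneg ℓ : (0:ℝ) ≤ (ℓ:ℝ))]
  -- integrability of the squared error on the pieces
  have hIend1 : IntervalIntegrable (fun t => (τhat t - τ t)^2) volume 0 (tstar 1) := by
    apply ContinuousOn.intervalIntegrable
    have hsub : Set.uIcc 0 (tstar 1) ⊆ Set.Icc (0:ℝ) 1 :=
      Set.uIcc_subset_Icc (Set.left_mem_Icc.2 zero_le_one) hT1mem
    refine ContinuousOn.congr (f := fun t => (a 1 - τ t)^2)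
      ((continuousOn_const.sub (hconton.mono hsub)).pow 2) ?_
    intro t htx
    have : t ∈ Set.Icc 0 (tstar 1) := by rwa [Set.uIcc_of_le hT1mem.1] at htx
    simp only [hτhat₁ t this]
  have hIend3 : IntervalIntegrable (fun t => (τhat t - τ t)^2) volume (tstar m) 1 := by
    apply ContinuousOn.intervalIntegrable
    have hsub : Set.uIcc (tstar m) 1 ⊆ Set.Icc (0:ℝ) 1 :=
      Set.uIcc_subset_Icc hTmmem (Set.right_mem_Icc.2 zero_le_one)
    refine ContinuousOn.congr (f := fun t => (a m - τ t)^2)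
      ((continuousOn_const.sub (hconton.mono hsub)).pow 2) ?_
    intro t htx
    have : t ∈ Set.Icc (tstar m) 1 := by rwa [Set.uIcc_of_le hTmmem.2] at htx
    simp only [hτhat₂ t this]
  have hImid : ∀ ℓ : ℕ, 1 ≤ ℓ → ℓ + 1 ≤ m →
      IntervalIntegrable (fun t => (τhat t - τ t)^2) volume (tstar ℓ) (tstar (ℓ+1)) := by
    intro ℓ h1 h2
    apply ContinuousOn.intervalIntegrable
    have hsub : Set.uIcc (tstar ℓ) (tstar (ℓ+1)) ⊆ Set.Icc (0:ℝ) 1 :=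
      Set.uIcc_subset_Icc (htmem ℓ h1 (by omega)) (htmem (ℓ+1) (by omega) h2)
    have hlin : Continuous (fun t : ℝ =>
        (m:ℝ) * (tstar (ℓ+1) - t) * a ℓ + (m:ℝ) * (t - tstar ℓ) * a (ℓ+1)) := by fun_prop
    refine ContinuousOn.congr (f := fun t =>
        ((m:ℝ) * (tstar (ℓ+1) - t) * a ℓ + (m:ℝ) * (t - tstar ℓ) * a (ℓ+1) - τ t)^2)
      ((hlin.continuousOn.sub (hconton.mono hsub)).pow 2) ?_
    intro t htx
    have : t ∈ Set.Icc (tstar ℓ) (tstar (ℓ+1)) := by rwa [Set.uIcc_of_le (htsmono ℓ)] at htx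
    simp only [hτhat₃ ℓ h1 h2 t this]
  have hchain : ∀ k : ℕ, 1 ≤ k → k ≤ m →
      IntervalIntegrable (fun t => (τhat t - τ t)^2) volume (tstar 1) (tstar k) := by
    intro k
    induction k with
    | zero => intro h; omega
    | succ n ih =>
      intro _ h2
      rcases Nat.eq_zero_or_pos n with rfl | hn
      · exact IntervalIntegrable.refl
      · exact (ih hn (by omega)).trans (hImid n hn h2)
  have hI2 := hchain m (by omega) le_rfl
  have e1 := integral_add_adjacent_intervals hI2 hIend3
  have e2 := integral_add_adjacent_intervals hIend1 (hI2.trans hIend3)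
  have h2m : 1/(2*(m:ℝ)) ≤ 1/(m:ℝ) := by
    rw [div_le_div_iff₀ (by positivity) (by positivity)]; linarith
  have hminv1 : 1/(m:ℝ) ≤ 1 := by rw [div_le_one hmpos]; linarith
  -- bound near the left end
  have hend1 : ∀ t ∈ Set.Icc (0:ℝ) (tstar 1), |a 1 - τ t| ≤ M/(m:ℝ) := by
    intro t ht
    have htm : t ∈ Set.Icc (0:ℝ) 1 := ⟨ht.1, le_trans ht.2 hT1mem.2⟩
    have hb0 : (((1:ℕ):ℝ) - 1)/(m:ℝ) = 0 := by norm_num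
    have hb1 : ((1:ℕ):ℝ)/(m:ℝ) = 1/(m:ℝ) := by norm_num
    have hqm : (1:ℝ)/m ∈ Set.Icc (0:ℝ) 1 := ⟨by positivity, hminv1⟩
    have hsub : Set.uIcc (0:ℝ) (1/(m:ℝ)) ⊆ Set.Icc 0 1 :=
      Set.uIcc_subset_Icc (Set.left_mem_Icc.2 zero_le_one) hqm
    have hIτ : IntervalIntegrable τ volume 0 (1/(m:ℝ)) := (hconton.mono hsub).intervalIntegrable
    have hkey : a 1 - τ t = m * ∫ s in (0:ℝ)..(1/(m:ℝ)), (τ s - τ t) := by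
      rw [intervalIntegral.integral_sub hIτ intervalIntegrable_const,
        intervalIntegral.integral_const, ha 1, hb0, hb1]
      simp only [smul_eq_mul, sub_zero]
      field_simp
    rw [hkey]
    have hbnd := intervalIntegral.norm_integral_le_of_norm_le_const
      (C := M * (1/(m:ℝ))) (f := fun s => τ s - τ t) (a := 0) (b := 1/(m:ℝ)) (by
        intro s hs
        have hsm : s ∈ Set.Ioc (0:ℝ) (1/m) := by rwa [Set.uIoc_of_le (by positivity)] at hs
        have hs1 : s ∈ Set.Icc (0:ℝ) 1 := ⟨hsm.1.le, le_trans hsm.2 hminv1⟩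
        have ht2 := ht.2
        rw [hT1val] at ht2
        have h7 : |s - t| ≤ 1/(m:ℝ) := by
          rw [abs_le]
          constructor
          · linarith [hsm.1.le, ht.1]
          · linarith [hsm.2, ht.1]
        calc ‖τ s - τ t‖ = |τ s - τ t| := Real.norm_eq_abs _
          _ ≤ M * |s - t| := aux_lip hα₁ hdiff hbd hholder hs1 htm
          _ ≤ M * (1/m) := mul_le_mul_of_nonneg_left h7 hM.le)
    rw [Real.norm_eq_abs, sub_zero, abs_of_nonneg (by positivity : (0:ℝ) ≤ 1/(m:ℝ))] at hbnd
    rw [abs_mul, abs_of_nonneg hmpos.le]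
    calc (m:ℝ) * |∫ s in (0:ℝ)..(1/(m:ℝ)), (τ s - τ t)| ≤ (m:ℝ) * (M * (1/m) * (1/m)) :=
          mul_le_mul_of_nonneg_left hbnd hmpos.le
      _ = M/(m:ℝ) := by field_simp
  -- bound near the right end
  have hend2 : ∀ t ∈ Set.Icc (tstar m) 1, |a m - τ t| ≤ M/(m:ℝ) := by
    intro t ht
    have htm : t ∈ Set.Icc (0:ℝ) 1 := ⟨le_trans hTmmem.1 ht.1, ht.2⟩
    have hq1 : ((m:ℕ):ℝ)/(m:ℝ) = 1 := div_self hmpos.ne'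
    set p : ℝ := ((m:ℝ) - 1)/m with hpd
    have hple : p ≤ 1 := by rw [hpd, div_le_one hmpos]; linarith
    have hpmem : p ∈ Set.Icc (0:ℝ) 1 := ⟨by rw [hpd]; exact div_nonneg (by linarith) hmpos.le, hple⟩
    have hsub : Set.uIcc p 1 ⊆ Set.Icc (0:ℝ) 1 :=
      Set.uIcc_subset_Icc hpmem (Set.right_mem_Icc.2 zero_le_one)
    have hIτ : IntervalIntegrable τ volume p 1 := (hconton.mono hsub).intervalIntegrable
    have h9 : 1 - p = 1/(m:ℝ) := by rw [hpd]; field_simp; ring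
    have h8 : 1 - tstar m = 1/(2*(m:ℝ)) := by rw [htstar]; field_simp; ring
    have hkey : a m - τ t = m * ∫ s in p..(1:ℝ), (τ s - τ t) := by
      rw [intervalIntegral.integral_sub hIτ intervalIntegrable_const,
        intervalIntegral.integral_const, ha m, hq1, hpd]
      simp only [smul_eq_mul]
      field_simp
      ring
    rw [hkey]
    have hbnd := intervalIntegral.norm_integral_le_of_norm_le_const
      (C := M * (1/(m:ℝ))) (f := fun s => τ s - τ t) (a := p) (b := 1) (by
        intro s hs
        have hsm : s ∈ Set.Ioc p 1 := by rwa [Set.uIoc_of_le hple] at hs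
        have hs1 : s ∈ Set.Icc (0:ℝ) 1 := ⟨le_trans hpmem.1 hsm.1.le, hsm.2⟩
        have h7 : |s - t| ≤ 1/(m:ℝ) := by
          rw [abs_le]
          constructor
          · linarith [hsm.1.le, ht.2]
          · linarith [hsm.2, ht.1, h8, h2m]
        calc ‖τ s - τ t‖ = |τ s - τ t| := Real.norm_eq_abs _
          _ ≤ M * |s - t| := aux_lip hα₁ hdiff hbd hholder hs1 htm
          _ ≤ M * (1/m) := mul_le_mul_of_nonneg_left h7 hM.le)
    rw [Real.norm_eq_abs] at hbnd
    have h10 : |1 - p| = 1/(m:ℝ) := by rw [h9]; exact abs_of_nonneg (by positivity)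
    rw [h10] at hbnd
    rw [abs_mul, abs_of_nonneg hmpos.le]
    calc (m:ℝ) * |∫ s in p..(1:ℝ), (τ s - τ t)| ≤ (m:ℝ) * (M * (1/m) * (1/m)) :=
          mul_le_mul_of_nonneg_left hbnd hmpos.le
      _ = M/(m:ℝ) := by field_simp
  -- piece bounds for the squared error
  have hMm : (0:ℝ) ≤ M/(m:ℝ) := by positivity
  have S1bound : (∫ t in (0:ℝ)..(tstar 1), (τhat t - τ t)^2) ≤ (M/(m:ℝ))^2 * (1/(2*(m:ℝ))) := by
    have hbnd := intervalIntegral.norm_integral_le_of_norm_le_const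
      (C := (M/(m:ℝ))^2) (f := fun t => (τhat t - τ t)^2) (a := 0) (b := tstar 1) (by
        intro x hx
        have hxm : x ∈ Set.Icc (0:ℝ) (tstar 1) := by
          rw [Set.uIoc_of_le hT1mem.1] at hx
          exact ⟨hx.1.le, hx.2⟩
        have h := hend1 x hxm
        show ‖(τhat x - τ x)^2‖ ≤ (M/(m:ℝ))^2
        rw [Real.norm_eq_abs, hτhat₁ x hxm, abs_of_nonneg (sq_nonneg _)]
        exact sq_le_sq' (by linarith [(abs_le.1 h).1]) (abs_le.1 h).2)
    have habs : |tstar 1 - 0| = 1/(2*(m:ℝ)) := by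
      rw [sub_zero, hT1val, abs_of_nonneg (by positivity)]
    rw [Real.norm_eq_abs, habs] at hbnd
    exact le_trans (le_abs_self _) hbnd
  have S3bound : (∫ t in (tstar m)..(1:ℝ), (τhat t - τ t)^2) ≤ (M/(m:ℝ))^2 * (1/(2*(m:ℝ))) := by
    have h8 : 1 - tstar m = 1/(2*(m:ℝ)) := by rw [htstar]; field_simp; ring
    have hbnd := intervalIntegral.norm_integral_le_of_norm_le_const
      (C := (M/(m:ℝ))^2) (f := fun t => (τhat t - τ t)^2) (a := tstar m) (b := 1) (by
        intro x hx
        have hxm : x ∈ Set.Icc (tstar m) 1 := by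
          rw [Set.uIoc_of_le hTmmem.2] at hx
          exact ⟨hx.1.le, hx.2⟩
        have h := hend2 x hxm
        show ‖(τhat x - τ x)^2‖ ≤ (M/(m:ℝ))^2
        rw [Real.norm_eq_abs, hτhat₂ x hxm, abs_of_nonneg (sq_nonneg _)]
        exact sq_le_sq' (by linarith [(abs_le.1 h).1]) (abs_le.1 h).2)
    have habs : |1 - tstar m| = 1/(2*(m:ℝ)) := by rw [h8]; exact abs_of_nonneg (by positivity)
    rw [Real.norm_eq_abs, habs] at hbnd
    exact le_trans (le_abs_self _) hbnd
  have hT1Tm : tstar 1 ≤ tstar m := by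
    rw [htstar, htstar, div_le_div_iff₀ (by positivity) (by positivity)]
    push_cast
    nlinarith
  have hdmid : tstar m - tstar 1 = 1 - 1/(m:ℝ) := by
    rw [htstar, htstar]; push_cast; field_simp; ring
  have hx2 : ((m:ℝ) ^ (-α₁))^2 = (m:ℝ) ^ (-(2*α₁)) := by
    rw [← Real.rpow_natCast ((m:ℝ) ^ (-α₁)) 2, ← Real.rpow_mul hmpos.le]
    norm_num
    ring_nf
  have hrpnn : (0:ℝ) ≤ (m:ℝ) ^ (-α₁) := Real.rpow_nonneg hmpos.le _
  have S2bound : (∫ t in (tstar 1)..(tstar m), (τhat t - τ t)^2) ≤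
      4 * M^2 * (m:ℝ) ^ (-(2*α₁)) := by
    have hbnd := intervalIntegral.norm_integral_le_of_norm_le_const
      (C := (2*M*(m:ℝ)^(-α₁))^2) (f := fun t => (τhat t - τ t)^2)
      (a := tstar 1) (b := tstar m) (by
        intro x hx
        have hxm : x ∈ Set.Icc (tstar 1) (tstar m) := by
          rw [Set.uIoc_of_le hT1Tm] at hx
          exact ⟨hx.1.le, hx.2⟩
        have h := parti x hxm
        show ‖(τhat x - τ x)^2‖ ≤ (2*M*(m:ℝ)^(-α₁))^2
        rw [Real.norm_eq_abs, abs_of_nonneg (sq_nonneg _)]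
        exact sq_le_sq' (by linarith [(abs_le.1 h).1]) (abs_le.1 h).2)
    have habs : |tstar m - tstar 1| ≤ 1 := by
      rw [hdmid, abs_le]
      constructor
      · have : 0 < 1/(m:ℝ) := by positivity
        linarith
      · linarith [hminv1, (by positivity : (0:ℝ) < 1/(m:ℝ))]
    rw [Real.norm_eq_abs] at hbnd
    have hCnn : (0:ℝ) ≤ (2*M*(m:ℝ)^(-α₁))^2 := sq_nonneg _
    calc (∫ t in (tstar 1)..(tstar m), (τhat t - τ t)^2)
        ≤ (2*M*(m:ℝ)^(-α₁))^2 * |tstar m - tstar 1| := le_trans (le_abs_self _) hbnd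
      _ ≤ (2*M*(m:ℝ)^(-α₁))^2 * 1 := mul_le_mul_of_nonneg_left habs hCnn
      _ = 4 * M^2 * ((m:ℝ)^(-α₁))^2 := by ring
      _ = 4 * M^2 * (m:ℝ) ^ (-(2*α₁)) := by rw [hx2]
  have hends : (M/(m:ℝ))^2 * (1/(2*(m:ℝ))) + (M/(m:ℝ))^2 * (1/(2*(m:ℝ))) = M^2/(m:ℝ)^3 := by
    field_simp
    ring
  have hsplit : (∫ t in (0:ℝ)..1, (τhat t - τ t)^2) =
      (∫ t in (0:ℝ)..(tstar 1), (τhat t - τ t)^2) +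
      (∫ t in (tstar 1)..(tstar m), (τhat t - τ t)^2) +
      (∫ t in (tstar m)..(1:ℝ), (τhat t - τ t)^2) := by
    rw [← e2, ← e1]
    ring
  rw [hsplit]
  linarith [S1bound, S2bound, S3bound, hends]
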